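/- With notation as above, define a graph on S_n with an edge from u to v whenever PDS(v) is obtained by appending exactly one simple reflection to the left of PDS(u). This graph is a spanning tree of the 1-skeleton of the permutohedron (the Cayley graph of S_n with generators the simple transpositions), rooted at the identity. -/

import Mathlib

/-- The Coxeter length of a permutation of `Fin n`: its number of inversions. -/
def permLen {n : ℕ} (σ : Equiv.Perm (Fin n)) : ℕ :=
  (Finset.univ.filter (fun p : Fin n × Fin n => p.1 < p.2 ∧ σ p.2 < σ p.1)).card

/-- The simple transposition `s_a = (a, a+1)` of `Fin n` (as an element of `S_n`),
defined to be the identity if `a + 1 ≥ n`.  (Here positions are 0-indexed, so `sT n a`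
corresponds to the simple transposition `s_{a+1}` in 1-indexed notation.) -/
def sT (n : ℕ) (a : ℕ) : Equiv.Perm (Fin n) :=
  if h : a + 1 < n then Equiv.swap ⟨a, Nat.lt_of_succ_lt h⟩ ⟨a + 1, h⟩ else 1

/-- The group element of the expression `s_{i_t} ⋯ s_{i_1}` encoded by the list
`[i_t, …, i_1]` (leftmost letter first), where permutations are multiplied left to right
(i.e. acting on the right), so that `exprProd (a :: l) = exprProd l * sT n a`. -/
def exprProd (n : ℕ) (l : List ℕ) : Equiv.Perm (Fin n) :=
  l.foldr (fun a g => g * sT n a) 1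

/-- A word is reduced if its length equals the Coxeter length of its product. -/
def IsReducedW (n : ℕ) (l : List ℕ) : Prop :=
  permLen (exprProd n l) = l.length

/-- Greedy right-to-left computation of the positive distinguished subexpression:
the input list is the word read from the right (`ω.reverse`); the state is
`v_{(j)}`, and a letter is selected exactly when right-multiplying by it decreases
length.  Returns the final state `v_{(t)}` together with the selected letters in
processing order (right to left). -/
def pdsAux (n : ℕ) : Equiv.Perm (Fin n) → List ℕ → Equiv.Perm (Fin n) × List ℕ
  | v, [] => (v, [])
  | v, a :: rest =>
    if permLen (sT n a * v) < permLen v then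
      ((pdsAux n (sT n a * v) rest).1, a :: (pdsAux n (sT n a * v) rest).2)
    else pdsAux n v rest

/-- The positive distinguished subexpression of `v` inside the word `ω`
(read in word order, leftmost letter first). -/
def pds (n : ℕ) (v : Equiv.Perm (Fin n)) (ω : List ℕ) : List ℕ :=
  (pdsAux n v ω.reverse).2.reverse

/-- The canonical reduced word `(s_1)(s_2 s_1)⋯(s_{n-1}⋯s_2 s_1)` for the longest element
of `S_n` (0-indexed letters: `[0] ++ [1,0] ++ ⋯ ++ [n-2,…,1,0]`). -/
def w0word (n : ℕ) : List ℕ :=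
  (List.range (n - 1)).flatMap (fun j => (List.range (j + 1)).reverse)

/-- The positive distinguished subexpression of `v` inside the canonical reduced word
for the longest element of `S_n`. -/
def PDSw (n : ℕ) (v : Equiv.Perm (Fin n)) : List ℕ := pds n v (w0word n)

/-- The tree on `S_n` whose edges join `u` and `v` when `PDS(v)` is obtained by appending
exactly one simple reflection to the left of `PDS(u)`. -/
def treeGraph (n : ℕ) : SimpleGraph (Equiv.Perm (Fin n)) where
  Adj u v := u ≠ v ∧ ∃ a : ℕ, PDSw n v = a :: PDSw n u ∨ PDSw n u = a :: PDSw n v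
  symm := by
    constructor
    rintro u v ⟨h, a, h2⟩
    exact ⟨h.symm, a, h2.symm⟩
  loopless := by
    constructor
    rintro u ⟨h, -⟩
    exact h rfl

/-- The 1-skeleton of the permutohedron: the Cayley graph of `S_n` with edges
`{u, u * s_i}` for the simple transpositions `s_i`. -/
def permGraph (n : ℕ) : SimpleGraph (Equiv.Perm (Fin n)) where
  Adj u v := u ≠ v ∧ ∃ a : ℕ, a + 1 < n ∧ (v = u * sT n a ∨ u = v * sT n a)
  symm := by
    constructor
    rintro u v ⟨h, a, ha, h2⟩
    exact ⟨h.symm, a, ha, h2.symm⟩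
  loopless := by
    constructor
    rintro u ⟨h, -⟩
    exact h rfl

theorem Equiv.Perm.inv_apply_self {α : Type*} (f : Equiv.Perm α) (x : α) : f⁻¹ (f x) = x :=
  f.symm_apply_apply x

theorem Equiv.Perm.apply_inv_self {α : Type*} (f : Equiv.Perm α) (x : α) : f (f⁻¹ x) = x :=
  f.apply_symm_apply x

namespace PDSaux

open Equiv Finset

variable {n : ℕ}

lemma sT_eq (a : ℕ) (h : a + 1 < n) :
    sT n a = Equiv.swap ⟨a, Nat.lt_of_succ_lt h⟩ ⟨a + 1, h⟩ := by
  simp [sT, h]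

lemma sT_eq_one (a : ℕ) (h : ¬ a + 1 < n) : sT n a = 1 := by simp [sT, h]

lemma sT_mul_self (a : ℕ) : sT n a * sT n a = 1 := by
  by_cases h : a + 1 < n
  · rw [sT_eq a h, Equiv.swap_mul_self]
  · rw [sT_eq_one a h, one_mul]

lemma sT_inv (a : ℕ) : (sT n a)⁻¹ = sT n a := by
  rw [inv_eq_iff_mul_eq_one, sT_mul_self]

lemma permLen_one : permLen (1 : Equiv.Perm (Fin n)) = 0 := by
  rw [permLen]
  convert Finset.card_empty
  rw [Finset.filter_eq_empty_iff]
  rintro ⟨p, q⟩ -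
  simp only [Equiv.Perm.one_apply, not_and]
  exact fun h1 h2 => absurd h1 (lt_asymm h2)

lemma swap_lt {i j u v : Fin n} (hij : (i : ℕ) + 1 = (j : ℕ))
    (h1 : ¬(u = i ∧ v = j)) (h2 : ¬(u = j ∧ v = i)) :
    Equiv.swap i j u < Equiv.swap i j v ↔ u < v := by
  rcases eq_or_ne u v with rfl | huv
  · simp
  simp only [Fin.lt_def]
  by_cases hui : u = i
  · subst hui
    have hvj : v ≠ j := fun hh => h1 ⟨rfl, hh⟩
    have hvu : v ≠ u := Ne.symm huv
    rw [Equiv.swap_apply_left, Equiv.swap_apply_of_ne_of_ne hvu hvj]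
    have h3 : (v : ℕ) ≠ (u : ℕ) := fun hh => hvu (Fin.ext hh)
    have h4 : (v : ℕ) ≠ (j : ℕ) := fun hh => hvj (Fin.ext hh)
    omega
  by_cases huj : u = j
  · subst huj
    have hvi : v ≠ i := fun hh => h2 ⟨rfl, hh⟩
    have hvu : v ≠ u := Ne.symm huv
    rw [Equiv.swap_apply_right, Equiv.swap_apply_of_ne_of_ne hvi hvu]
    have h3 : (v : ℕ) ≠ (i : ℕ) := fun hh => hvi (Fin.ext hh)
    have h4 : (v : ℕ) ≠ (u : ℕ) := fun hh => hvu (Fin.ext hh)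
    omega
  rw [Equiv.swap_apply_of_ne_of_ne hui huj]
  by_cases hvi : v = i
  · subst hvi
    rw [Equiv.swap_apply_left]
    have h3 : (u : ℕ) ≠ (v : ℕ) := fun hh => hui (Fin.ext hh)
    have h4 : (u : ℕ) ≠ (j : ℕ) := fun hh => huj (Fin.ext hh)
    omega
  by_cases hvj : v = j
  · subst hvj
    rw [Equiv.swap_apply_right]
    have h3 : (u : ℕ) ≠ (i : ℕ) := fun hh => hui (Fin.ext hh)
    have h4 : (u : ℕ) ≠ (v : ℕ) := fun hh => huj (Fin.ext hh)
    omega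
  rw [Equiv.swap_apply_of_ne_of_ne hvi hvj]

lemma descent_iff (c : ℕ) (h : c + 1 < n) (x : Equiv.Perm (Fin n)) :
    permLen (sT n c * x) < permLen x ↔
      x⁻¹ ⟨c + 1, h⟩ < x⁻¹ ⟨c, Nat.lt_of_succ_lt h⟩ := by
  set i : Fin n := ⟨c, Nat.lt_of_succ_lt h⟩ with hi
  set j : Fin n := ⟨c + 1, h⟩ with hj
  have hij : (i : ℕ) + 1 = (j : ℕ) := rfl
  have hiltj : i < j := by simp [Fin.lt_def, hi, hj]
  have happ : ∀ p, (sT n c * x) p = Equiv.swap i j (x p) := by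
    intro p; rw [sT_eq c h]; rfl
  rcases lt_trichotomy (x⁻¹ i) (x⁻¹ j) with hlt | heq | hgt
  · -- ascent : both sides false
    have hset : (Finset.univ.filter
          (fun p : Fin n × Fin n => p.1 < p.2 ∧ (sT n c * x) p.2 < (sT n c * x) p.1))
        = insert (x⁻¹ i, x⁻¹ j)
            (Finset.univ.filter (fun p : Fin n × Fin n => p.1 < p.2 ∧ x p.2 < x p.1)) := by
      ext ⟨p, q⟩
      simp only [Finset.mem_filter, Finset.mem_insert, Finset.mem_univ, true_and, happ,
        Prod.mk.injEq]
      constructor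
      · rintro ⟨hpq, hs⟩
        by_cases hc1 : x q = j ∧ x p = i
        · left
          constructor
          · rw [← hc1.2, Equiv.Perm.inv_apply_self]
          · rw [← hc1.1, Equiv.Perm.inv_apply_self]
        · by_cases hc2 : x q = i ∧ x p = j
          · exfalso
            have e1 : x⁻¹ j = p := by rw [← hc2.2, Equiv.Perm.inv_apply_self]
            have e2 : x⁻¹ i = q := by rw [← hc2.1, Equiv.Perm.inv_apply_self]
            exact absurd (e1 ▸ e2 ▸ hpq) (asymm hlt)
          · exact Or.inr ⟨hpq, (swap_lt hij hc2 hc1).mp hs⟩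
      · rintro (⟨hp, hq⟩ | ⟨hpq, hs⟩)
        · subst hp; subst hq
          refine ⟨hlt, ?_⟩
          rw [Equiv.Perm.apply_inv_self, Equiv.Perm.apply_inv_self,
            Equiv.swap_apply_left, Equiv.swap_apply_right]
          exact hiltj
        · refine ⟨hpq, ?_⟩
          refine (swap_lt hij ?_ ?_).mpr hs
          · rintro ⟨hq, hp⟩
            have e1 : x⁻¹ j = p := by rw [← hp, Equiv.Perm.inv_apply_self]
            have e2 : x⁻¹ i = q := by rw [← hq, Equiv.Perm.inv_apply_self]
            exact absurd (e1 ▸ e2 ▸ hpq) (asymm hlt)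
          · rintro ⟨hq, hp⟩
            rw [hq, hp] at hs
            exact absurd hs (asymm hiltj)
    have hnotmem : (x⁻¹ i, x⁻¹ j) ∉
        (Finset.univ.filter (fun p : Fin n × Fin n => p.1 < p.2 ∧ x p.2 < x p.1)) := by
      intro hmem
      rw [Finset.mem_filter] at hmem
      have h2 := hmem.2.2
      rw [Equiv.Perm.apply_inv_self, Equiv.Perm.apply_inv_self] at h2
      exact absurd h2 (asymm hiltj)
    have hcard : permLen (sT n c * x) = permLen x + 1 := by
      rw [permLen, permLen, hset, Finset.card_insert_of_notMem hnotmem]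
    exact iff_of_false (by omega) (asymm hlt)
  · exact absurd ((x⁻¹).injective heq) (fun hh => by
      rw [hh] at hij; omega)
  · -- descent : both sides true
    have hset : (Finset.univ.filter (fun p : Fin n × Fin n => p.1 < p.2 ∧ x p.2 < x p.1))
        = insert (x⁻¹ j, x⁻¹ i)
            (Finset.univ.filter
              (fun p : Fin n × Fin n => p.1 < p.2 ∧ (sT n c * x) p.2 < (sT n c * x) p.1)) := by
      ext ⟨p, q⟩
      simp only [Finset.mem_filter, Finset.mem_insert, Finset.mem_univ, true_and, happ,
        Prod.mk.injEq]
      constructor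
      · rintro ⟨hpq, hs⟩
        by_cases hc1 : x q = i ∧ x p = j
        · left
          constructor
          · rw [← hc1.2, Equiv.Perm.inv_apply_self]
          · rw [← hc1.1, Equiv.Perm.inv_apply_self]
        · by_cases hc2 : x q = j ∧ x p = i
          · exfalso
            rw [hc2.1, hc2.2] at hs
            exact absurd hs (asymm hiltj)
          · refine Or.inr ⟨hpq, ?_⟩
            refine (swap_lt hij ?_ ?_).mpr hs
            · exact hc1
            · exact hc2
      · rintro (⟨hp, hq⟩ | ⟨hpq, hs⟩)
        · subst hp; subst hq
          refine ⟨hgt, ?_⟩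
          rw [Equiv.Perm.apply_inv_self, Equiv.Perm.apply_inv_self]
          exact hiltj
        · refine ⟨hpq, ?_⟩
          refine (swap_lt hij ?_ ?_).mp hs
          · rintro ⟨hq, hp⟩
            rw [hq, hp] at hs
            rw [Equiv.swap_apply_left, Equiv.swap_apply_right] at hs
            exact absurd hs (asymm hiltj)
          · rintro ⟨hq, hp⟩
            have e1 : x⁻¹ i = p := by rw [← hp, Equiv.Perm.inv_apply_self]
            have e2 : x⁻¹ j = q := by rw [← hq, Equiv.Perm.inv_apply_self]
            exact absurd (e1 ▸ e2 ▸ hpq) (asymm hgt)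
    have hnotmem : (x⁻¹ j, x⁻¹ i) ∉
        (Finset.univ.filter
          (fun p : Fin n × Fin n => p.1 < p.2 ∧ (sT n c * x) p.2 < (sT n c * x) p.1)) := by
      intro hmem
      rw [Finset.mem_filter] at hmem
      have h2 := hmem.2.2
      rw [happ, happ, Equiv.Perm.apply_inv_self, Equiv.Perm.apply_inv_self,
        Equiv.swap_apply_left, Equiv.swap_apply_right] at h2
      exact absurd h2 (asymm hiltj)
    have hcard : permLen x = permLen (sT n c * x) + 1 := by
      rw [permLen, permLen, hset, Finset.card_insert_of_notMem hnotmem]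
    exact iff_of_true (by omega) hgt

end PDSaux

namespace PDSaux

variable {n : ℕ}

lemma pdsAux_nil (v : Equiv.Perm (Fin n)) : pdsAux n v [] = (v, []) := rfl

lemma pdsAux_cons (v : Equiv.Perm (Fin n)) (a : ℕ) (rest : List ℕ) :
    pdsAux n v (a :: rest) =
      if permLen (sT n a * v) < permLen v then
        ((pdsAux n (sT n a * v) rest).1, a :: (pdsAux n (sT n a * v) rest).2)
      else pdsAux n v rest := rfl

lemma pdsAux_snd_nil : ∀ (l : List ℕ) (v : Equiv.Perm (Fin n)),
    (pdsAux n v l).2 = [] → (pdsAux n v l).1 = v := by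
  intro l
  induction l with
  | nil => intro v _; rfl
  | cons a rest ih =>
    intro v hv
    rw [pdsAux_cons] at hv ⊢
    split_ifs with hc
    · rw [if_pos hc] at hv; simp at hv
    · rw [if_neg hc] at hv; exact ih v hv

lemma pdsAux_one : ∀ l : List ℕ, pdsAux n (1 : Equiv.Perm (Fin n)) l = (1, []) := by
  intro l
  induction l with
  | nil => rfl
  | cons a rest ih =>
    rw [pdsAux_cons, if_neg, ih]
    rw [mul_one, permLen_one]
    omega

lemma exprProd_nil : exprProd n [] = 1 := rfl

lemma exprProd_cons (a : ℕ) (l : List ℕ) :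
    exprProd n (a :: l) = exprProd n l * sT n a := rfl

lemma exprProd_concat (a : ℕ) : ∀ l : List ℕ,
    exprProd n (l ++ [a]) = sT n a * exprProd n l := by
  intro l
  induction l with
  | nil => rw [List.nil_append, exprProd_cons, exprProd_nil, one_mul, mul_one]
  | cons b t ih =>
    rw [List.cons_append, exprProd_cons, exprProd_cons, ih, mul_assoc]

lemma pdsAux_prod : ∀ (l : List ℕ) (v : Equiv.Perm (Fin n)),
    exprProd n ((pdsAux n v l).2.reverse) * (pdsAux n v l).1 = v := by
  intro l
  induction l with
  | nil => intro v; rw [pdsAux_nil]; simp [exprProd_nil]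
  | cons a rest ih =>
    intro v
    rw [pdsAux_cons]
    split_ifs with hc
    · simp only [List.reverse_cons, exprProd_concat, mul_assoc]
      rw [ih (sT n a * v), ← mul_assoc, sT_mul_self, one_mul]
    · exact ih v

lemma pdsAux_mem : ∀ (l : List ℕ) (v : Equiv.Perm (Fin n)) (a : ℕ),
    a ∈ (pdsAux n v l).2 → a + 1 < n := by
  intro l
  induction l with
  | nil => intro v a ha; simp [pdsAux_nil] at ha
  | cons b rest ih =>
    intro v a ha
    rw [pdsAux_cons] at ha
    split_ifs at ha with hc
    · simp only [List.mem_cons] at ha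
      rcases ha with rfl | ha
      · by_contra hn
        rw [sT_eq_one a hn, one_mul] at hc
        exact absurd hc (lt_irrefl _)
      · exact ih _ a ha
    · exact ih v a ha

lemma pdsAux_fst_append : ∀ (l1 l2 : List ℕ) (v : Equiv.Perm (Fin n)),
    (pdsAux n v (l1 ++ l2)).1 = (pdsAux n (pdsAux n v l1).1 l2).1 := by
  intro l1
  induction l1 with
  | nil => intro l2 v; rfl
  | cons a rest ih =>
    intro l2 v
    rw [List.cons_append, pdsAux_cons, pdsAux_cons]
    split_ifs with hc
    · exact ih l2 (sT n a * v)
    · exact ih l2 v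

/-- Positively-sorted pair persists: the last selected letter can never be `a`
if the run from a state with the pair `(a, a+1)` in sorted order ends at `1`. -/
lemma PSL : ∀ (l : List ℕ) (x : Equiv.Perm (Fin n)) (a : ℕ) (h : a + 1 < n),
    x ⟨a, Nat.lt_of_succ_lt h⟩ < x ⟨a + 1, h⟩ → ∀ sel : List ℕ,
    pdsAux n x l ≠ (1, sel ++ [a]) := by
  intro l
  induction l with
  | nil =>
    intro x a h _ sel heq
    rw [pdsAux_nil, Prod.mk.injEq] at heq
    exact absurd heq.2.symm (List.append_ne_nil_of_right_ne_nil sel (by simp))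
  | cons c rest ih =>
    intro x a h hsort sel heq
    rw [pdsAux_cons] at heq
    by_cases hc : permLen (sT n c * x) < permLen x
    · rw [if_pos hc] at heq
      rw [Prod.mk.injEq] at heq
      obtain ⟨h1, h2⟩ := heq
      by_cases hcn : c + 1 < n
      swap
      · rw [sT_eq_one c hcn, one_mul] at hc; exact absurd hc (lt_irrefl _)
      have hsort' : (sT n c * x) ⟨a, Nat.lt_of_succ_lt h⟩ < (sT n c * x) ⟨a + 1, h⟩ := by
        have hxi : ¬(x ⟨a, Nat.lt_of_succ_lt h⟩ = ⟨c, Nat.lt_of_succ_lt hcn⟩ ∧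
            x ⟨a + 1, h⟩ = ⟨c + 1, hcn⟩) := by
          rintro ⟨e1, e2⟩
          have hd := (descent_iff c hcn x).mp hc
          have e1' : x⁻¹ ⟨c, Nat.lt_of_succ_lt hcn⟩ = ⟨a, Nat.lt_of_succ_lt h⟩ := by
            rw [← e1, Equiv.Perm.inv_apply_self]
          have e2' : x⁻¹ ⟨c + 1, hcn⟩ = ⟨a + 1, h⟩ := by
            rw [← e2, Equiv.Perm.inv_apply_self]
          rw [e1', e2'] at hd
          simp [Fin.lt_def] at hd
        have hxj : ¬(x ⟨a, Nat.lt_of_succ_lt h⟩ = ⟨c + 1, hcn⟩ ∧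
            x ⟨a + 1, h⟩ = ⟨c, Nat.lt_of_succ_lt hcn⟩) := by
          rintro ⟨e1, e2⟩
          rw [e1, e2] at hsort
          simp [Fin.lt_def] at hsort
        rw [sT_eq c hcn]
        exact (swap_lt rfl hxi hxj).mpr hsort
      cases sel with
      | nil =>
        rw [List.nil_append] at h2
        obtain ⟨hca, hr2⟩ : c = a ∧ (pdsAux n (sT n c * x) rest).2 = [] := by
          constructor
          · exact (List.cons.injEq _ _ _ _).mp h2 |>.1
          · exact (List.cons.injEq _ _ _ _).mp h2 |>.2
        have hfst := pdsAux_snd_nil rest (sT n c * x) hr2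
        rw [h1] at hfst
        -- x = sT n c, c = a: contradiction with hsort
        have hx : x = sT n c := by
          have := congrArg (fun z => sT n c * z) hfst.symm
          simpa [← mul_assoc, sT_mul_self] using this
        subst hca
        rw [hx, sT_eq c hcn] at hsort
        rw [Equiv.swap_apply_left, Equiv.swap_apply_right] at hsort
        simp [Fin.lt_def] at hsort
      | cons s ss =>
        rw [List.cons_append] at h2
        obtain ⟨hcs, hr2⟩ := (List.cons.injEq _ _ _ _).mp h2
        exact ih (sT n c * x) a h hsort' ss (Prod.ext h1 hr2)
    · rw [if_neg hc] at heq
      exact ih x a h hsort sel heq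

/-- The key "coupled runs" lemma: removing the last selected letter. -/
lemma K3 : ∀ (l : List ℕ) (x : Equiv.Perm (Fin n)) (a : ℕ) (h : a + 1 < n),
    x ⟨a + 1, h⟩ < x ⟨a, Nat.lt_of_succ_lt h⟩ → ∀ sel : List ℕ,
    pdsAux n x l = (1, sel ++ [a]) → pdsAux n (x * sT n a) l = (1, sel) := by
  intro l
  induction l with
  | nil =>
    intro x a h _ sel heq
    rw [pdsAux_nil, Prod.mk.injEq] at heq
    exact absurd heq.2.symm (List.append_ne_nil_of_right_ne_nil sel (by simp))
  | cons c rest ih =>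
    intro x a h hinv sel heq
    by_cases hcn : c + 1 < n
    swap
    · have hid : sT n c = 1 := sT_eq_one c hcn
      rw [pdsAux_cons, hid, one_mul, if_neg (lt_irrefl _)] at heq
      rw [pdsAux_cons, hid, one_mul, if_neg (lt_irrefl _)]
      exact ih x a h hinv sel heq
    have hu_inv : ∀ p, (x * sT n a)⁻¹ p =
        Equiv.swap ⟨a, Nat.lt_of_succ_lt h⟩ ⟨a + 1, h⟩ (x⁻¹ p) := by
      intro p
      rw [mul_inv_rev, sT_inv, sT_eq a h]
      rfl
    have hwrong : ¬(x⁻¹ ⟨c + 1, hcn⟩ = ⟨a + 1, h⟩ ∧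
        x⁻¹ ⟨c, Nat.lt_of_succ_lt hcn⟩ = ⟨a, Nat.lt_of_succ_lt h⟩) := by
      rintro ⟨e1, e2⟩
      have f1 : x ⟨a + 1, h⟩ = ⟨c + 1, hcn⟩ := by rw [← e1, Equiv.Perm.apply_inv_self]
      have f2 : x ⟨a, Nat.lt_of_succ_lt h⟩ = ⟨c, Nat.lt_of_succ_lt hcn⟩ := by
        rw [← e2, Equiv.Perm.apply_inv_self]
      rw [f1, f2] at hinv
      simp [Fin.lt_def] at hinv
    by_cases hP : x⁻¹ ⟨c, Nat.lt_of_succ_lt hcn⟩ = ⟨a + 1, h⟩ ∧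
        x⁻¹ ⟨c + 1, hcn⟩ = ⟨a, Nat.lt_of_succ_lt h⟩
    · -- the critical step: this must be the last selection
      have hc : permLen (sT n c * x) < permLen x := by
        rw [descent_iff c hcn x, hP.1, hP.2]
        simp [Fin.lt_def]
      rw [pdsAux_cons, if_pos hc, Prod.mk.injEq] at heq
      obtain ⟨h1, h2⟩ := heq
      have exi : x ⟨a + 1, h⟩ = ⟨c, Nat.lt_of_succ_lt hcn⟩ := by
        rw [← hP.1, Equiv.Perm.apply_inv_self]
      have exj : x ⟨a, Nat.lt_of_succ_lt h⟩ = ⟨c + 1, hcn⟩ := by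
        rw [← hP.2, Equiv.Perm.apply_inv_self]
      have hsorted : (sT n c * x) ⟨a, Nat.lt_of_succ_lt h⟩ < (sT n c * x) ⟨a + 1, h⟩ := by
        rw [sT_eq c hcn]
        show Equiv.swap _ _ (x _) < Equiv.swap _ _ (x _)
        rw [exi, exj, Equiv.swap_apply_left, Equiv.swap_apply_right]
        simp [Fin.lt_def]
      cases sel with
      | nil =>
        rw [List.nil_append] at h2
        obtain ⟨hca, hr2⟩ := (List.cons.injEq _ _ _ _).mp h2
        have hfst := pdsAux_snd_nil rest (sT n c * x) hr2
        rw [h1] at hfst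
        have hx : x = sT n c := by
          have := congrArg (fun z => sT n c * z) hfst.symm
          simpa [← mul_assoc, sT_mul_self] using this
        have hu1 : x * sT n a = 1 := by rw [hx, hca, sT_mul_self]
        rw [hu1, pdsAux_one]
      | cons s ss =>
        rw [List.cons_append] at h2
        obtain ⟨hcs, hr2⟩ := (List.cons.injEq _ _ _ _).mp h2
        exact absurd (Prod.ext h1 hr2)
          (PSL rest (sT n c * x) a h hsorted ss)
    · -- the generic step: both runs make the same decision
      have hdec : permLen (sT n c * (x * sT n a)) < permLen (x * sT n a) ↔
          permLen (sT n c * x) < permLen x := by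
        rw [descent_iff c hcn, descent_iff c hcn, hu_inv, hu_inv]
        refine swap_lt rfl ?_ ?_
        · rintro ⟨e1, e2⟩; exact hP ⟨e2, e1⟩
        · exact hwrong
      rw [pdsAux_cons] at heq
      rw [pdsAux_cons]
      by_cases hc : permLen (sT n c * x) < permLen x
      · rw [if_pos hc, Prod.mk.injEq] at heq
        obtain ⟨h1, h2⟩ := heq
        rw [if_pos (hdec.mpr hc)]
        cases sel with
        | nil =>
          exfalso
          rw [List.nil_append] at h2
          obtain ⟨hca, hr2⟩ := (List.cons.injEq _ _ _ _).mp h2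
          have hfst := pdsAux_snd_nil rest (sT n c * x) hr2
          rw [h1] at hfst
          have hx : x = sT n c := by
            have := congrArg (fun z => sT n c * z) hfst.symm
            simpa [← mul_assoc, sT_mul_self] using this
          apply hP
          subst hca
          constructor
          · rw [hx, sT_inv, sT_eq c hcn]
            exact Equiv.swap_apply_left _ _
          · rw [hx, sT_inv, sT_eq c hcn]
            exact Equiv.swap_apply_right _ _
        | cons s ss =>
          rw [List.cons_append] at h2
          obtain ⟨hcs, hr2⟩ := (List.cons.injEq _ _ _ _).mp h2
          have hinv' : (sT n c * x) ⟨a + 1, h⟩ < (sT n c * x) ⟨a, Nat.lt_of_succ_lt h⟩ := by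
            have h1' : ¬(x ⟨a + 1, h⟩ = ⟨c, Nat.lt_of_succ_lt hcn⟩ ∧
                x ⟨a, Nat.lt_of_succ_lt h⟩ = ⟨c + 1, hcn⟩) := by
              rintro ⟨e1, e2⟩
              apply hP
              constructor
              · rw [← e1, Equiv.Perm.inv_apply_self]
              · rw [← e2, Equiv.Perm.inv_apply_self]
            have h2' : ¬(x ⟨a + 1, h⟩ = ⟨c + 1, hcn⟩ ∧
                x ⟨a, Nat.lt_of_succ_lt h⟩ = ⟨c, Nat.lt_of_succ_lt hcn⟩) := by
              rintro ⟨e1, e2⟩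
              apply hwrong
              constructor
              · rw [← e1, Equiv.Perm.inv_apply_self]
              · rw [← e2, Equiv.Perm.inv_apply_self]
            rw [sT_eq c hcn]
            show Equiv.swap _ _ (x _) < Equiv.swap _ _ (x _)
            exact (swap_lt rfl h1' h2').mpr hinv
          have hrec := ih (sT n c * x) a h hinv' ss (Prod.ext h1 hr2)
          rw [← mul_assoc, hrec, hcs]
      · rw [if_neg hc] at heq
        rw [if_neg (fun hh => hc (hdec.mp hh))]
        exact ih x a h hinv sel heq

end PDSaux

namespace PDSaux

variable {n : ℕ}

lemma perm_fix_lt {x : Equiv.Perm (Fin n)} {k : ℕ}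
    (hfix : ∀ p : Fin n, k ≤ (p : ℕ) → x p = p) {q : Fin n} (hq : (q : ℕ) < k) :
    ((x q : Fin n) : ℕ) < k := by
  by_contra hcon
  push_neg at hcon
  have h1 : x (x q) = x q := hfix (x q) hcon
  have h2 : x q = q := x.injective h1
  rw [h2] at hcon
  omega

lemma perm_inv_fix {x : Equiv.Perm (Fin n)} {k : ℕ}
    (hfix : ∀ p : Fin n, k ≤ (p : ℕ) → x p = p) :
    ∀ p : Fin n, k ≤ (p : ℕ) → x⁻¹ p = p := by
  intro p hp
  conv_lhs => rw [← hfix p hp]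
  rw [Equiv.Perm.inv_apply_self]

/-- One bubble pass: processing letters `c, c+1, …, m` moves the value `m+1`
to position `m+1`, while leaving everything `≥ m+2` fixed. -/
lemma pass (m : ℕ) (hm : m + 1 < n) : ∀ (k c : ℕ) (x : Equiv.Perm (Fin n)),
    c + k = m + 1 →
    (∀ p : Fin n, m + 2 ≤ (p : ℕ) → x p = p) →
    c ≤ ((x ⟨m + 1, hm⟩ : Fin n) : ℕ) →
    (∀ p : Fin n, m + 2 ≤ (p : ℕ) → (pdsAux n x (List.range' c k)).1 p = p) ∧
      (pdsAux n x (List.range' c k)).1 ⟨m + 1, hm⟩ = ⟨m + 1, hm⟩ := by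
  intro k
  induction k with
  | zero =>
    intro c x hck hfix hpos
    have hnil : List.range' c 0 = [] := rfl
    rw [hnil, pdsAux_nil]
    refine ⟨hfix, ?_⟩
    have hub : ((x ⟨m + 1, hm⟩ : Fin n) : ℕ) < m + 2 :=
      perm_fix_lt hfix (by simp only [Fin.val_mk]; omega)
    apply Fin.ext
    simp only [Fin.val_mk]
    show ((x ⟨m + 1, hm⟩ : Fin n) : ℕ) = m + 1
    omega
  | succ k ihk =>
    intro c x hck hfix hpos
    have hc1 : c + 1 < n := by omega
    have hcm : c ≤ m := by omega
    rw [List.range'_succ, pdsAux_cons]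
    have hubx : ((x ⟨m + 1, hm⟩ : Fin n) : ℕ) < m + 2 := perm_fix_lt hfix (by simp only [Fin.val_mk]; omega)
    have hfixinv := perm_inv_fix hfix
    have hubi : ((x⁻¹ ⟨c, Nat.lt_of_succ_lt hc1⟩ : Fin n) : ℕ) < m + 2 :=
      perm_fix_lt hfixinv (by simp only [Fin.val_mk]; omega)
    have hubj : ((x⁻¹ ⟨c + 1, hc1⟩ : Fin n) : ℕ) < m + 2 :=
      perm_fix_lt hfixinv (by simp only [Fin.val_mk]; omega)
    by_cases hcond : permLen (sT n c * x) < permLen x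
    · rw [if_pos hcond]
      have hfix' : ∀ p : Fin n, m + 2 ≤ (p : ℕ) → (sT n c * x) p = p := by
        intro p hp
        have hxp : x p = p := hfix p hp
        rw [Equiv.Perm.mul_apply, hxp, sT_eq c hc1, Equiv.swap_apply_of_ne_of_ne]
        · intro hh; rw [hh] at hp; simp only [Fin.val_mk] at hp; omega
        · intro hh; rw [hh] at hp; simp only [Fin.val_mk] at hp; omega
      have hpos' : c + 1 ≤ (((sT n c * x) ⟨m + 1, hm⟩ : Fin n) : ℕ) := by
        rw [Equiv.Perm.mul_apply, sT_eq c hc1]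
        rcases Nat.lt_trichotomy ((x ⟨m + 1, hm⟩ : Fin n) : ℕ) (c + 1) with hlt | heqq | hgt
        · have hxc : x ⟨m + 1, hm⟩ = ⟨c, Nat.lt_of_succ_lt hc1⟩ :=
            Fin.ext (by simp only [Fin.val_mk]; omega)
          rw [hxc, Equiv.swap_apply_left]
        · exfalso
          have hxc : x ⟨m + 1, hm⟩ = ⟨c + 1, hc1⟩ := Fin.ext (by simp only [Fin.val_mk]; omega)
          have hd := (descent_iff c hc1 x).mp hcond
          have e1 : x⁻¹ ⟨c + 1, hc1⟩ = ⟨m + 1, hm⟩ := by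
            rw [← hxc, Equiv.Perm.inv_apply_self]
          rw [e1, Fin.lt_def] at hd
          simp only [Fin.val_mk] at hd
          omega
        · rw [Equiv.swap_apply_of_ne_of_ne]
          · omega
          · intro hh; rw [hh] at hgt; simp only [Fin.val_mk] at hgt; omega
          · intro hh; rw [hh] at hgt; simp only [Fin.val_mk] at hgt; omega
      exact ihk (c + 1) (sT n c * x) (by omega) hfix' hpos'
    · rw [if_neg hcond]
      have hpos' : c + 1 ≤ ((x ⟨m + 1, hm⟩ : Fin n) : ℕ) := by
        rcases Nat.eq_or_lt_of_le hpos with heqq | hgt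
        · exfalso
          have hxc : x ⟨m + 1, hm⟩ = ⟨c, Nat.lt_of_succ_lt hc1⟩ :=
            Fin.ext (by simp only [Fin.val_mk]; omega)
          apply hcond
          rw [descent_iff c hc1 x]
          have e1 : x⁻¹ ⟨c, Nat.lt_of_succ_lt hc1⟩ = ⟨m + 1, hm⟩ := by
            rw [← hxc, Equiv.Perm.inv_apply_self]
          rw [e1, Fin.lt_def]
          simp only [Fin.val_mk]
          have hne : ((x⁻¹ ⟨c + 1, hc1⟩ : Fin n) : ℕ) ≠ m + 1 := by
            intro hh
            have h4 : x⁻¹ ⟨c + 1, hc1⟩ = ⟨m + 1, hm⟩ := Fin.ext (by simp only [Fin.val_mk]; omega)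
            rw [← e1] at h4
            have h3 := x⁻¹.injective h4
            rw [Fin.ext_iff] at h3
            simp only [Fin.val_mk] at h3
            omega
          omega
        · exact hgt
      exact ihk (c + 1) x (by omega) hfix hpos'

/-- Processing the reversed canonical word sorts any permutation to the identity. -/
lemma Rlem : ∀ (m : ℕ), m < n → ∀ (x : Equiv.Perm (Fin n)),
    (∀ p : Fin n, m + 1 ≤ (p : ℕ) → x p = p) →
    (pdsAux n x ((List.range m).reverse.flatMap (fun j => List.range (j + 1)))).1 = 1 := by
  intro m
  induction m with
  | zero =>
    intro _ x hfix
    simp only [List.range_zero, List.reverse_nil, List.flatMap_nil, pdsAux_nil]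
    apply Equiv.ext
    intro p
    show x p = p
    by_cases hp : 1 ≤ (p : ℕ)
    · exact hfix p hp
    · rcases Nat.eq_zero_or_pos ((x p : Fin n) : ℕ) with h0 | h1
      · exact Fin.ext (by omega)
      · have h2 : x (x p) = x p := hfix (x p) h1
        exact x.injective h2
  | succ m ihm =>
    intro hmn x hfix
    have hlist : ((List.range (m + 1)).reverse.flatMap (fun j => List.range (j + 1)))
        = List.range (m + 1) ++ ((List.range m).reverse.flatMap (fun j => List.range (j + 1))) := by
      conv_lhs => rw [List.range_succ]
      rw [List.reverse_append, List.reverse_singleton, List.singleton_append, List.flatMap_cons]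
    rw [hlist, pdsAux_fst_append, List.range_eq_range']
    have hpass := pass m hmn (m + 1) 0 x (by omega) (by intro p hp; exact hfix p (by omega))
      (by omega)
    apply ihm (by omega)
    intro p hp
    rcases Nat.eq_or_lt_of_le hp with heqq | hgt
    · have hpe : p = ⟨m + 1, hmn⟩ := Fin.ext (by simp only [Fin.val_mk]; omega)
      rw [hpe]
      exact hpass.2
    · exact hpass.1 p (by omega)

/-- The pds run of the canonical word always ends at the identity. -/
lemma final_one (x : Equiv.Perm (Fin n)) : (pdsAux n x (w0word n).reverse).1 = 1 := by
  rcases Nat.eq_zero_or_pos n with hn | hn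
  · subst hn
    ext p
    exact p.elim0
  · rw [w0word, List.reverse_flatMap]
    have hfun : (List.reverse ∘ fun j => (List.range (j + 1)).reverse) =
        (fun j => List.range (j + 1)) := by
      funext j
      simp
    rw [hfun]
    apply Rlem (n - 1) (by omega)
    intro p hp
    exfalso
    have := p.2
    omega

end PDSaux

namespace PDSaux

variable {n : ℕ}

lemma PDSw_prod (v : Equiv.Perm (Fin n)) : exprProd n (PDSw n v) = v := by
  have h := pdsAux_prod ((w0word n).reverse) v
  rw [final_one v, mul_one] at h
  exact h

lemma PDSw_one : PDSw n 1 = [] := by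
  rw [PDSw, pds, pdsAux_one]
  rfl

lemma PDSw_inj {u v : Equiv.Perm (Fin n)} (h : PDSw n u = PDSw n v) : u = v := by
  rw [← PDSw_prod u, h, PDSw_prod]

lemma PDSw_eq_nil {v : Equiv.Perm (Fin n)} (h : PDSw n v = []) : v = 1 := by
  rw [← PDSw_prod v, h, exprProd_nil]

lemma PDSw_mem {v : Equiv.Perm (Fin n)} {a : ℕ} (h : a ∈ PDSw n v) : a + 1 < n :=
  pdsAux_mem ((w0word n).reverse) v a (List.mem_reverse.mp h)

lemma PDSw_tail {v : Equiv.Perm (Fin n)} {a : ℕ} {t : List ℕ} (hv : PDSw n v = a :: t) :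
    PDSw n (v * sT n a) = t := by
  have ha : a + 1 < n := PDSw_mem (by rw [hv]; exact List.mem_cons_self)
  have hrun : pdsAux n v (w0word n).reverse = (1, t.reverse ++ [a]) := by
    refine Prod.ext (final_one v) ?_
    have h2 : (pdsAux n v (w0word n).reverse).2 = (PDSw n v).reverse :=
      (List.reverse_reverse _).symm
    rw [h2, hv, List.reverse_cons]
  have hinv : v ⟨a + 1, ha⟩ < v ⟨a, Nat.lt_of_succ_lt ha⟩ := by
    rcases lt_trichotomy (v ⟨a, Nat.lt_of_succ_lt ha⟩) (v ⟨a + 1, ha⟩) with hlt | heq | hgt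
    · exact absurd hrun (PSL _ v a ha hlt t.reverse)
    · exfalso
      have := v.injective heq
      rw [Fin.ext_iff] at this
      simp only [Fin.val_mk] at this
      omega
    · exact hgt
  have hres := K3 ((w0word n).reverse) v a ha hinv t.reverse hrun
  show (pdsAux n (v * sT n a) (w0word n).reverse).2.reverse = t
  rw [hres]
  exact List.reverse_reverse t

lemma adj_step {u v : Equiv.Perm (Fin n)} {a : ℕ} (h : PDSw n v = a :: PDSw n u) :
    a + 1 < n ∧ v = u * sT n a := by
  refine ⟨PDSw_mem (by rw [h]; exact List.mem_cons_self), ?_⟩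
  conv_lhs => rw [← PDSw_prod v, h, exprProd_cons, PDSw_prod]

lemma tree_reachable (v : Equiv.Perm (Fin n)) : (treeGraph n).Reachable v 1 := by
  have key : ∀ (k : ℕ) (v : Equiv.Perm (Fin n)), (PDSw n v).length = k →
      (treeGraph n).Reachable v 1 := by
    intro k
    induction k using Nat.strong_induction_on with
    | _ k ih =>
      intro v hk
      cases hpd : PDSw n v with
      | nil => rw [PDSw_eq_nil hpd]
      | cons a t =>
        have ht := PDSw_tail hpd
        have hne : v ≠ v * sT n a := by
          intro hh
          have h2 : PDSw n v = PDSw n (v * sT n a) := by rw [← hh]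
          rw [hpd, ht] at h2
          exact List.cons_ne_self a t h2
        have hadj : (treeGraph n).Adj v (v * sT n a) :=
          ⟨hne, a, Or.inr (by rw [hpd, ht])⟩
        refine hadj.reachable.trans (ih t.length ?_ (v * sT n a) (by rw [ht]))
        rw [hpd] at hk
        simp only [List.length_cons] at hk
        omega
  exact key _ v rfl

lemma smaller_neighbor {w x : Equiv.Perm (Fin n)} (h : (treeGraph n).Adj w x)
    (hle : (PDSw n x).length ≤ (PDSw n w).length) :
    ∃ a, PDSw n w = a :: PDSw n x := by
  obtain ⟨hne, a, hc | hc⟩ := h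
  · exfalso
    rw [hc] at hle
    simp only [List.length_cons] at hle
    omega
  · exact ⟨a, hc⟩

lemma cycle_at_max {w : Equiv.Perm (Fin n)} (p : (treeGraph n).Walk w w)
    (hp : p.IsCycle)
    (hsup : ∀ z ∈ p.support, (PDSw n z).length ≤ (PDSw n w).length) : False := by
  cases p with
  | nil => exact SimpleGraph.Walk.IsCycle.not_of_nil hp
  | cons h q =>
    rename_i x
    cases hq : q.reverse with
    | nil => exact h.ne rfl
    | cons h2 q2 =>
      rename_i y
      have hxs : x ∈ q.support := q.start_mem_support
      have hys : y ∈ q.support := by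
        have hy2 : y ∈ q.reverse.support := by
          rw [hq, SimpleGraph.Walk.support_cons]
          exact List.mem_cons_of_mem _ q2.start_mem_support
        rwa [SimpleGraph.Walk.support_reverse, List.mem_reverse] at hy2
      have hxle : (PDSw n x).length ≤ (PDSw n w).length := by
        apply hsup
        rw [SimpleGraph.Walk.support_cons]
        exact List.mem_cons_of_mem _ hxs
      have hyle : (PDSw n y).length ≤ (PDSw n w).length := by
        apply hsup
        rw [SimpleGraph.Walk.support_cons]
        exact List.mem_cons_of_mem _ hys
      obtain ⟨a1, ha1⟩ := smaller_neighbor h hxle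
      obtain ⟨a2, ha2⟩ := smaller_neighbor h2 hyle
      have hxy : x = y := by
        apply PDSw_inj
        have h3 : a1 :: PDSw n x = a2 :: PDSw n y := by rw [← ha1, ← ha2]
        exact (List.cons.injEq _ _ _ _).mp h3 |>.2
      have hmem : s(w, y) ∈ q.edges := by
        have hm2 : s(w, y) ∈ q.reverse.edges := by
          rw [hq, SimpleGraph.Walk.edges_cons]
          exact List.mem_cons_self
        rwa [SimpleGraph.Walk.edges_reverse, List.mem_reverse] at hm2
      have hnodup := hp.isCircuit.isTrail.edges_nodup
      rw [SimpleGraph.Walk.edges_cons] at hnodup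
      have hnm := (List.nodup_cons.mp hnodup).1
      rw [← hxy] at hmem
      exact hnm hmem

lemma tree_acyclic : (treeGraph n).IsAcyclic := by
  classical
  intro v c hc
  obtain ⟨w, hw, hmax⟩ := Finset.exists_max_image c.support.toFinset
    (fun z => (PDSw n z).length) ⟨v, by rw [List.mem_toFinset]; exact c.start_mem_support⟩
  rw [List.mem_toFinset] at hw
  have hc' := hc.rotate hw
  have hsup : ∀ z ∈ (c.rotate w hw).support, (PDSw n z).length ≤ (PDSw n w).length := by
    intro z hz
    apply hmax
    rw [List.mem_toFinset]
    rw [SimpleGraph.Walk.support_eq_cons] at hz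
    rcases List.mem_cons.mp hz with rfl | hz'
    · exact hw
    · have hrot := SimpleGraph.Walk.support_rotate c w hw
      have : z ∈ c.support.tail := (hrot.perm.mem_iff).mp hz'
      exact List.mem_of_mem_tail this
  exact cycle_at_max (c.rotate w hw) hc' hsup

end PDSaux

/-- The graph whose edges join `u`, `v` whenever `PDS(v)` is obtained by appending one
simple reflection to the left of `PDS(u)` is a spanning tree of the 1-skeleton of the
permutohedron (the Cayley graph of `S_n` with the simple transpositions), rooted at the
identity (the unique vertex with empty PDS). -/
theorem stmt4 (n : ℕ) :
    treeGraph n ≤ permGraph n ∧ (treeGraph n).IsTree ∧ PDSw n 1 = [] := by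
  classical
  refine ⟨?_, ⟨?_, PDSaux.tree_acyclic⟩, PDSaux.PDSw_one⟩
  · intro u v huv
    obtain ⟨hne, a, hc | hc⟩ := huv
    · obtain ⟨ha, hv⟩ := PDSaux.adj_step hc
      exact ⟨hne, a, ha, Or.inl hv⟩
    · obtain ⟨ha, hv⟩ := PDSaux.adj_step hc
      exact ⟨hne, a, ha, Or.inr hv⟩
  · rw [SimpleGraph.connected_iff]
    refine ⟨fun u v => (PDSaux.tree_reachable u).trans (PDSaux.tree_reachable v).symm, ⟨1⟩⟩
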